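/- Let G be a finite undirected graph (possibly with loops), let k ≥ 1, and let i be a multiset of size k over the vertices of G. Let U be the number of vertices of G adjacent to at least one element of i (i.e., U = |⋃_{s ∈ i} N_G(s)|). Then the degree of i in G^{⊙k} satisfies both deg_{G^{⊙k}}(i) ≤ binom(U + k − 1, k) and deg_{G^{⊙k}}(i) ≤ ∏_{s} deg_G(s)^{m_s(i)}, where m_s(i) is the multiplicity of s in i. -/

import Mathlib

/-- Adjacency in the (unweighted) `k`-th symmetric tensor power of a graph given by an
adjacency relation `adj` on `V`: multisets `i` and `j` of size `k` are adjacent iff there are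
`k`-tuples `p, q` with underlying multisets `i` and `j` such that `p ℓ` is adjacent to `q ℓ`
for every `ℓ`. -/
def symPowAdj {V : Type*} (adj : V → V → Prop) (k : ℕ) (i j : Sym V k) : Prop :=
  ∃ p q : Fin k → V,
    (↑(List.ofFn p) : Multiset V) = ↑i ∧ (↑(List.ofFn q) : Multiset V) = ↑j ∧
    ∀ ℓ : Fin k, adj (p ℓ) (q ℓ)

/-- Two tuples whose `List.ofFn` lists are permutations of each other differ by
composition with a permutation of `Fin n`. -/
theorem exists_perm_comp_of_perm {α : Type*} [LinearOrder α] {n : ℕ} (f g : Fin n → α)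
    (h : (List.ofFn f).Perm (List.ofFn g)) : ∃ σ : Equiv.Perm (Fin n), f = g ∘ σ := by
  have hperm : (List.ofFn (f ∘ Tuple.sort f)).Perm (List.ofFn (g ∘ Tuple.sort g)) :=
    ((Equiv.Perm.ofFn_comp_perm _ f).trans h).trans (Equiv.Perm.ofFn_comp_perm _ g).symm
  have heq : f ∘ Tuple.sort f = g ∘ Tuple.sort g :=
    List.ofFn_inj.mp <| List.Perm.eq_of_sortedLE
      (Tuple.monotone_sort f).sortedLE_ofFn (Tuple.monotone_sort g).sortedLE_ofFn hperm
  refine ⟨(Tuple.sort f).symm.trans (Tuple.sort g), funext fun x => ?_⟩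
  have := congrFun heq ((Tuple.sort f).symm x)
  simpa using this

/-- for a vertex `i` of `G^{⊙k}` (a multiset of size `k` over the vertices of
`G`), with `U` the number of vertices adjacent to at least one element of `i`, the degree of
`i` in `G^{⊙k}` is at most `binom(U + k − 1, k)` and at most `∏_s deg_G(s)^{m_s(i)}`. -/
theorem symPow_degree_bounds {V : Type*} [Fintype V] [DecidableEq V]
    (adj : V → V → Prop) (hsym : Symmetric adj) (k : ℕ) (hk : 1 ≤ k) (i : Sym V k) :
    {j : Sym V k | symPowAdj adj k i j}.ncard ≤
        Nat.choose ({y : V | ∃ s ∈ (i : Multiset V), adj s y}.ncard + k - 1) k ∧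
    {j : Sym V k | symPowAdj adj k i j}.ncard ≤
        ∏ s : V, ({y : V | adj s y}.ncard) ^ (Multiset.count s (i : Multiset V)) := by
  classical
  letI : LinearOrder V := LinearOrder.lift' _ (Fintype.equivFin V).injective
  set N := {j : Sym V k | symPowAdj adj k i j} with hN
  constructor
  · -- first bound
    set S := {y : V | ∃ s ∈ (i : Multiset V), adj s y} with hS
    have hmem : ∀ j ∈ N, ∀ y ∈ (j : Multiset V), y ∈ S := by
      rintro j ⟨p, q, hp, hq, hadj⟩ y hy
      rw [← hq, Multiset.mem_coe, List.mem_ofFn] at hy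
      obtain ⟨ℓ, rfl⟩ := hy
      refine ⟨p ℓ, ?_, hadj ℓ⟩
      rw [← hp, Multiset.mem_coe, List.mem_ofFn]
      exact ⟨ℓ, rfl⟩
    set F : N → Sym {y // y ∈ S} k := fun x =>
      ⟨((x.1 : Multiset V)).attach.map (fun z => ⟨z.1, hmem x.1 x.2 z.1 z.2⟩), by
        simp [x.1.2]⟩ with hF
    have hFinj : Function.Injective F := by
      rintro ⟨a, ha⟩ ⟨b, hb⟩ hab
      have h1 := congrArg (fun s => Multiset.map Subtype.val s.1) hab
      simp only [hF, Multiset.map_map, Function.comp] at h1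
      rw [show (fun z : {z // z ∈ (a : Multiset V)} => z.1) = Subtype.val from rfl,
        show (fun z : {z // z ∈ (b : Multiset V)} => z.1) = Subtype.val from rfl,
        Multiset.attach_map_val, Multiset.attach_map_val] at h1
      exact Subtype.ext (Subtype.ext h1)
    calc N.ncard = Nat.card N := (Nat.card_coe_set_eq N).symm
      _ ≤ Nat.card (Sym {y // y ∈ S} k) := Nat.card_le_card_of_injective F hFinj
      _ = Nat.choose (S.ncard + k - 1) k := by
          rw [Nat.card_eq_fintype_card, Sym.card_sym_eq_choose, ← Nat.card_coe_set_eq,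
            Nat.card_eq_fintype_card]
  · -- second bound
    obtain ⟨l, hl, hlen⟩ : ∃ l : List V, (↑l : Multiset V) = ↑i ∧ l.length = k :=
      ⟨(i : Multiset V).toList, Multiset.coe_toList _, by
        rw [Multiset.length_toList]; exact i.2⟩
    set p₀ : Fin k → V := fun ℓ => l.get (Fin.cast hlen.symm ℓ) with hp₀def
    have hp₀ : (↑(List.ofFn p₀) : Multiset V) = ↑i := by
      rw [← hl]
      congr 1
      apply List.ext_getElem
      · simp [hlen]
      · intro n h1 h2
        simp [hp₀def]
    have key : ∀ j ∈ N, ∃ q' : Fin k → V,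
        (↑(List.ofFn q') : Multiset V) = ↑j ∧ ∀ ℓ, adj (p₀ ℓ) (q' ℓ) := by
      rintro j ⟨p, q, hp, hq, hadj⟩
      have hperm : (List.ofFn p).Perm (List.ofFn p₀) :=
        Multiset.coe_eq_coe.mp (hp.trans hp₀.symm)
      obtain ⟨σ, hσ⟩ := exists_perm_comp_of_perm p p₀ hperm
      refine ⟨q ∘ σ.symm, ?_, fun ℓ => ?_⟩
      · rw [← hq]
        exact Multiset.coe_eq_coe.mpr (Equiv.Perm.ofFn_comp_perm σ.symm q)
      · have h1 := hadj (σ.symm ℓ)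
        rw [hσ] at h1
        simpa using h1
    set G : N → (∀ ℓ : Fin k, {y // adj (p₀ ℓ) y}) := fun x ℓ =>
      ⟨(key x.1 x.2).choose ℓ, (key x.1 x.2).choose_spec.2 ℓ⟩ with hG
    have hGinj : Function.Injective G := by
      rintro ⟨a, ha⟩ ⟨b, hb⟩ hab
      have h1 : (key a ha).choose = (key b hb).choose := by
        funext ℓ
        exact congrArg Subtype.val (congrFun hab ℓ)
      have h2 : (a : Multiset V) = (b : Multiset V) := by
        rw [← (key a ha).choose_spec.1, ← (key b hb).choose_spec.1, h1]
      exact Subtype.ext (Subtype.ext h2)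
    have hcard : Nat.card N ≤ ∏ ℓ : Fin k, {y : V | adj (p₀ ℓ) y}.ncard := by
      calc Nat.card N ≤ Nat.card (∀ ℓ : Fin k, {y // adj (p₀ ℓ) y}) :=
            Nat.card_le_card_of_injective G hGinj
        _ = ∏ ℓ : Fin k, {y : V | adj (p₀ ℓ) y}.ncard := by
            rw [Nat.card_eq_fintype_card, Fintype.card_pi]
            refine Finset.prod_congr rfl fun ℓ _ => ?_
            rw [← Nat.card_coe_set_eq, Nat.card_eq_fintype_card]
            rfl
    have hprod : ∏ ℓ : Fin k, {y : V | adj (p₀ ℓ) y}.ncard =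
        ∏ s : V, ({y : V | adj s y}.ncard) ^ (Multiset.count s (i : Multiset V)) := by
      set d : V → ℕ := fun s => {y : V | adj s y}.ncard with hd
      have h1 : ∏ ℓ : Fin k, d (p₀ ℓ) = ((List.ofFn p₀ : Multiset V).map d).prod := by
        simp [← List.prod_ofFn, List.map_ofFn, Function.comp_def]
      rw [h1, hp₀]
      rw [Finset.prod_multiset_map_count]
      refine Finset.prod_subset (Finset.subset_univ _) fun s _ hs => ?_
      rw [Multiset.count_eq_zero_of_notMem (by simpa using hs), pow_zero]
    rw [← Nat.card_coe_set_eq]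
    exact hcard.trans_eq hprod
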